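/- Let 0 ≤ k < min(m,n) and let β be an entry of B (a root of g). Then Sres_k(f,g) evaluated at β equals (−1)^{m−k} · coeff_k( Sres_k(f, g/(x−β)) ) · f(β), where g/(x−β) is the exact quotient (monic of degree n−1), Sres_k(f, g/(x−β)) is the k-th subresultant formed with respect to degrees m and n−1, and coeff_k denotes the coefficient of x^k. -/

import Mathlib

open Polynomial Finset

noncomputable section

variable {F : Type*} [Field F]

/-- Coefficient of a polynomial at an integer index (0 for negative indices). -/
def coeffZ (f : F[X]) (z : ℤ) : F := if 0 ≤ z then f.coeff z.toNat else 0

/-- The `(m+n-2k) × (m+n-2k)` matrix `M_k(f,g)` whose determinant is the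
`k`-th subresultant of `f` (of degree `m`) and `g` (of degree `n`). -/
def sresM (m n k : ℕ) (f g : F[X]) :
    Matrix (Fin (m + n - 2*k)) (Fin (m + n - 2*k)) F[X] := fun i j =>
  if (j : ℕ) = m + n - 2*k - 1 then
    if (i : ℕ) < n - k then X ^ (n - k - 1 - (i : ℕ)) * f
    else X ^ (m - k - 1 - ((i : ℕ) - (n - k))) * g
  else
    if (i : ℕ) < n - k then C (coeffZ f ((m : ℤ) + (i : ℕ) - (j : ℕ)))
    else C (coeffZ g ((k : ℤ) + (i : ℕ) - (j : ℕ)))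

/-- `M_k(f,g)` with the last column replaced by `(x^{n-k-1},…,x^0,0,…,0)ᵀ`. -/
def sresMF (m n k : ℕ) (f g : F[X]) :
    Matrix (Fin (m + n - 2*k)) (Fin (m + n - 2*k)) F[X] := fun i j =>
  if (j : ℕ) = m + n - 2*k - 1 then
    if (i : ℕ) < n - k then X ^ (n - k - 1 - (i : ℕ)) else 0
  else sresM m n k f g i j

/-- `M_k(f,g)` with the last column replaced by `(0,…,0,x^{m-k-1},…,x^0)ᵀ`. -/
def sresMG (m n k : ℕ) (f g : F[X]) :
    Matrix (Fin (m + n - 2*k)) (Fin (m + n - 2*k)) F[X] := fun i j =>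
  if (j : ℕ) = m + n - 2*k - 1 then
    if (i : ℕ) < n - k then 0 else X ^ (m - k - 1 - ((i : ℕ) - (n - k)))
  else sresM m n k f g i j

/-- The `k`-th subresultant `Sres_k(f,g)` w.r.t. degrees `m`, `n`. -/
def Sres (m n k : ℕ) (f g : F[X]) : F[X] := (sresM m n k f g).det

/-- The polynomial `F_k(f,g)` w.r.t. degrees `m`, `n`. -/
def Fk (m n k : ℕ) (f g : F[X]) : F[X] := (sresMF m n k f g).det

/-- The polynomial `G_k(f,g)` w.r.t. degrees `m`, `n`. -/
def Gk (m n k : ℕ) (f g : F[X]) : F[X] := (sresMG m n k f g).det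

/-- `R(Y,Z) = ∏_{y ∈ Y, z ∈ Z} (y - z)`. -/
def Rp {ι κ : Type*} (a : ι → F) (b : κ → F) (S : Finset ι) (T : Finset κ) : F :=
  ∏ i ∈ S, ∏ j ∈ T, (a i - b j)

/-- `R(x,Y) = ∏_{y ∈ Y} (x - y)` as a polynomial. -/
def RX {ι : Type*} (a : ι → F) (S : Finset ι) : F[X] :=
  ∏ i ∈ S, (X - C (a i))

/-- Sylvester's double sum `Sylv^{p,q}(A,B)`. -/
def sylv {m n : ℕ} (A : Fin m → F) (B : Fin n → F) (p q : ℕ) : F[X] :=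
  ∑ S ∈ (univ : Finset (Fin m)).powersetCard p,
    ∑ T ∈ (univ : Finset (Fin n)).powersetCard q,
      C ((Rp A B S T * Rp A B Sᶜ Tᶜ) / (Rp A A S Sᶜ * Rp B B T Tᶜ)) *
        (RX A S * RX B T)

end

noncomputable section StatementTen

variable {F : Type*} [Field F]

/-- plain coefficient matrix -/
def Cmat (m n k : ℕ) (f g : F[X]) : Matrix (Fin (m + n - 2*k)) (Fin (m + n - 2*k)) F :=
  fun i j =>
    if (i : ℕ) < n - k then coeffZ f ((m : ℤ) + (i : ℕ) - (j : ℕ))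
    else coeffZ g ((k : ℤ) + (i : ℕ) - (j : ℕ))

/-- evaluated matrix -/
def Emat (m n k : ℕ) (β : F) (f g : F[X]) :
    Matrix (Fin (m + n - 2*k)) (Fin (m + n - 2*k)) F := fun i j =>
  if (j : ℕ) = m + n - 2*k - 1 then
    (if (i : ℕ) < n - k then β ^ (n - k - 1 - (i : ℕ)) else 0)
  else if (i : ℕ) < n - k then coeffZ f ((m : ℤ) + (i : ℕ) - (j : ℕ))
  else coeffZ g ((k : ℤ) + (i : ℕ) - (j : ℕ))

/-- transformed matrix -/
def Ehat (m n k : ℕ) (β : F) (f g' : F[X]) :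
    Matrix (Fin (m + n - 2*k)) (Fin (m + n - 2*k)) F := fun i j =>
  if (j : ℕ) = m + n - 2*k - 1 then (if (i : ℕ) = n - k - 1 then 1 else 0)
  else if (i : ℕ) < n - k - 1 then coeffZ f ((m : ℤ) + (i : ℕ) - (j : ℕ))
  else if (i : ℕ) = n - k - 1 then
    ∑ l ∈ Finset.range ((j : ℕ) + 1), coeffZ f ((m : ℤ) + (i : ℕ) - l) * β ^ ((j : ℕ) - l)
  else coeffZ g' ((k : ℤ) + (i : ℕ) - 1 - (j : ℕ))

def Tmat (m n k : ℕ) (β : F) : Matrix (Fin (m + n - 2*k)) (Fin (m + n - 2*k)) F :=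
  fun i p => if p = i then 1 else if (p : ℕ) = (i : ℕ) + 1 ∧ (i : ℕ) < n - k - 1 then -β else 0

def Umat (m n k : ℕ) (β : F) : Matrix (Fin (m + n - 2*k)) (Fin (m + n - 2*k)) F :=
  fun l j => if (j : ℕ) = m + n - 2*k - 1 then (if l = j then 1 else 0)
    else if (l : ℕ) ≤ (j : ℕ) then β ^ ((j : ℕ) - (l : ℕ)) else 0

def EUmat (m n k : ℕ) (β : F) (f g : F[X]) :
    Matrix (Fin (m + n - 2*k)) (Fin (m + n - 2*k)) F := fun p j =>
  if (j : ℕ) = m + n - 2*k - 1 then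
    (if (p : ℕ) < n - k then β ^ (n - k - 1 - (p : ℕ)) else 0)
  else
    ∑ l ∈ Finset.range ((j : ℕ) + 1),
      (if (p : ℕ) < n - k then coeffZ f ((m : ℤ) + (p : ℕ) - l)
       else coeffZ g ((k : ℤ) + (p : ℕ) - l)) * β ^ ((j : ℕ) - l)

lemma sum_one_spike {N : ℕ} (i : Fin N) (a : F) (w : Fin N → F) :
    ∑ p : Fin N, (if p = i then a else 0) * w p = a * w i := by
  rw [Finset.sum_eq_single i]
  · simp
  · intro p _ hp; rw [if_neg hp, zero_mul]
  · intro h; exact absurd (Finset.mem_univ i) h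

lemma sum_two_spike {N : ℕ} (i i' : Fin N) (h : i ≠ i') (a b : F) (w : Fin N → F) :
    ∑ p : Fin N, (if p = i then a else if p = i' then b else 0) * w p
      = a * w i + b * w i' := by
  have key : ∀ p : Fin N, (if p = i then a else if p = i' then b else 0) * w p
      = (if p = i then a * w p else 0) + (if p = i' then b * w p else 0) := by
    intro p
    by_cases h1 : p = i
    · subst h1
      rw [if_pos rfl, if_pos rfl, if_neg h]
      ring
    · by_cases h2 : p = i'
      · subst h2; rw [if_neg h1, if_pos rfl, if_neg h1, if_pos rfl]; ring
      · rw [if_neg h1, if_neg h2, if_neg h1, if_neg h2]; ring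
  rw [Finset.sum_congr rfl fun p _ => key p, Finset.sum_add_distrib,
    Finset.sum_ite_eq' Finset.univ i (fun p => a * w p),
    Finset.sum_ite_eq' Finset.univ i' (fun p => b * w p)]
  simp

lemma sum_cut {N : ℕ} (j : ℕ) (h : j + 1 ≤ N) (c : ℕ → F) :
    (∑ q : Fin N, if (q : ℕ) ≤ j then c q else 0) = ∑ q ∈ Finset.range (j + 1), c q := by
  rw [Fin.sum_univ_eq_sum_range (fun q => if q ≤ j then c q else 0) N, ← Finset.sum_filter]
  congr 1
  ext x
  simp only [Finset.mem_filter, Finset.mem_range]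
  omega

lemma telescope (β : F) (A : ℤ → F) (c : ℤ) (j : ℕ) (hA : A (c + 1) = 0) :
    (∑ l ∈ Finset.range (j + 1), A (c - l) * β ^ (j - l))
      - β * ∑ l ∈ Finset.range (j + 1), A (c + 1 - l) * β ^ (j - l) = A (c - j) := by
  have h2 : β * ∑ l ∈ Finset.range (j + 1), A (c + 1 - l) * β ^ (j - l)
      = ∑ l ∈ Finset.range (j + 1), A (c + 1 - l) * β ^ (j + 1 - l) := by
    rw [Finset.mul_sum]
    refine Finset.sum_congr rfl fun l hl => ?_
    have hl' : l ≤ j := by simpa [Nat.lt_succ_iff] using hl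
    rw [show j + 1 - l = (j - l) + 1 by omega, pow_succ]
    ring
  rw [h2, Finset.sum_range_succ' (fun l => A (c + 1 - l) * β ^ (j + 1 - l)) j,
    Finset.sum_range_succ (fun l => A (c - l) * β ^ (j - l)) j]
  have h3 : (∑ l ∈ Finset.range j, A (c + 1 - ((l + 1 : ℕ) : ℤ)) * β ^ (j + 1 - (l + 1)))
      = ∑ l ∈ Finset.range j, A (c - l) * β ^ (j - l) := by
    refine Finset.sum_congr rfl fun l hl => ?_
    rw [show (c + 1 - ((l + 1 : ℕ) : ℤ)) = c - l by push_cast; ring,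
      show j + 1 - (l + 1) = j - l by omega]
  rw [h3]
  simp [hA]

lemma coeff_det_updateColumn {N : ℕ} (Amat : Matrix (Fin N) (Fin N) F)
    (u : Fin N → F[X]) (j₀ : Fin N) (k : ℕ) :
    (((Amat.map Polynomial.C).updateCol j₀ u).det).coeff k
      = (Amat.updateCol j₀ fun i => (u i).coeff k).det := by
  rw [Matrix.det_apply, Matrix.det_apply, Polynomial.finset_sum_coeff]
  refine Finset.sum_congr rfl fun σ _ => ?_
  have hsm : ∀ p : F[X], (Equiv.Perm.sign σ • p).coeff k = Equiv.Perm.sign σ • p.coeff k := by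
    intro p
    rcases Int.units_eq_one_or (Equiv.Perm.sign σ) with h | h <;>
      simp [h, Units.smul_def]
  rw [hsm]
  congr 1
  rw [← Finset.mul_prod_erase Finset.univ _ (Finset.mem_univ j₀),
    ← Finset.mul_prod_erase Finset.univ
      (fun i => (Amat.updateCol j₀ fun i' => (u i').coeff k) (σ i) i) (Finset.mem_univ j₀)]
  have h1 : ∀ i ∈ Finset.univ.erase j₀,
      ((Amat.map Polynomial.C).updateCol j₀ u) (σ i) i = Polynomial.C (Amat (σ i) i) := by
    intro i hi
    rw [Matrix.updateCol_ne (Finset.ne_of_mem_erase hi)]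
    rfl
  have h2 : ∀ i ∈ Finset.univ.erase j₀,
      (Amat.updateCol j₀ fun i' => (u i').coeff k) (σ i) i = Amat (σ i) i := by
    intro i hi
    rw [Matrix.updateCol_ne (Finset.ne_of_mem_erase hi)]
  rw [Finset.prod_congr rfl h1, Finset.prod_congr rfl h2, ← map_prod,
    Matrix.updateCol_self, Matrix.updateCol_self, mul_comm, Polynomial.coeff_C_mul,
    mul_comm]

lemma neg_one_pow_par {a b : ℕ} (h : a % 2 = b % 2) : ((-1 : F) ^ a = (-1 : F) ^ b) := by
  rcases Nat.even_or_odd a with ha | ha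
  · have ha' := Nat.even_iff.mp ha
    rw [ha.neg_one_pow, (Nat.even_iff.mpr (by omega : b % 2 = 0)).neg_one_pow]
  · have ha' := Nat.odd_iff.mp ha
    rw [ha.neg_one_pow, (Nat.odd_iff.mpr (by omega : b % 2 = 1)).neg_one_pow]

lemma step1 {m n k : ℕ} (hm : k < m) (hn : k < n) (β : F) (f g : F[X])
    (hg0 : g.eval β = 0) :
    (Sres m n k f g).eval β = f.eval β * (Emat m n k β f g).det := by
  obtain ⟨jL, hjL⟩ : ∃ jL : Fin (m + n - 2*k), (jL : ℕ) = m + n - 2*k - 1 :=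
    ⟨⟨m + n - 2*k - 1, by omega⟩, rfl⟩
  have key : (sresM m n k f g).map (Polynomial.evalRingHom β)
      = (Emat m n k β f g).updateCol jL
          (f.eval β • fun i => Emat m n k β f g i jL) := by
    funext i j
    rw [Matrix.map_apply]
    by_cases hj : (j : ℕ) = m + n - 2*k - 1
    · have hj' : j = jL := Fin.ext (by rw [hjL]; exact hj)
      rw [hj', Matrix.updateCol_self, Pi.smul_apply, smul_eq_mul]
      by_cases hi : (i : ℕ) < n - k
      · rw [sresM, Emat, if_pos hjL, if_pos hjL, if_pos hi, if_pos hi]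
        simp [mul_comm]
      · rw [sresM, Emat, if_pos hjL, if_pos hjL, if_neg hi, if_neg hi]
        simp [hg0]
    · have hj' : j ≠ jL := fun hh => hj (by rw [hh, hjL])
      rw [Matrix.updateCol_ne hj', sresM, Emat, if_neg hj, if_neg hj]
      by_cases hi : (i : ℕ) < n - k <;> simp [hi]
  have e0 : (Sres m n k f g).eval β
      = ((sresM m n k f g).map (Polynomial.evalRingHom β)).det := by
    rw [Sres]
    have h := RingHom.map_det (Polynomial.evalRingHom β) (sresM m n k f g)
    simpa using h
  rw [e0, key, Matrix.det_updateCol_smul, Matrix.updateCol_eq_self]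

lemma sres_coeff {m n k : ℕ} (hm : k < m) (hn : k ≤ n) (f g : F[X]) :
    (Sres m n k f g).coeff k = (Cmat m n k f g).det := by
  obtain ⟨jL, hjL⟩ : ∃ jL : Fin (m + n - 2*k), (jL : ℕ) = m + n - 2*k - 1 :=
    ⟨⟨m + n - 2*k - 1, by omega⟩, rfl⟩
  set u : Fin (m + n - 2*k) → F[X] := fun i =>
    if (i : ℕ) < n - k then X ^ (n - k - 1 - (i : ℕ)) * f
    else X ^ (m - k - 1 - ((i : ℕ) - (n - k))) * g with hu
  have h1 : sresM m n k f g = ((Cmat m n k f g).map Polynomial.C).updateCol jL u := by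
    funext i j
    by_cases hj : (j : ℕ) = m + n - 2*k - 1
    · have hj' : j = jL := Fin.ext (by rw [hjL]; exact hj)
      rw [hj', Matrix.updateCol_self, sresM, if_pos hjL, hu]
    · have hj' : j ≠ jL := fun hh => hj (by rw [hh, hjL])
      rw [Matrix.updateCol_ne hj', sresM, if_neg hj, Matrix.map_apply, Cmat]
      by_cases hi : (i : ℕ) < n - k <;> simp [hi]
  have h2 : (fun i => (u i).coeff k) = fun i => Cmat m n k f g i jL := by
    funext i
    have hiv := i.2
    by_cases hi : (i : ℕ) < n - k
    · rw [hu]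
      simp only [if_pos hi]
      rw [Polynomial.coeff_X_pow_mul', Cmat, if_pos hi, coeffZ, hjL]
      by_cases hle : n - k - 1 - (i : ℕ) ≤ k
      · rw [if_pos hle, if_pos (by push_cast; omega)]
        congr 1
        omega
      · rw [if_neg hle, if_neg (by push_cast; omega)]
    · rw [hu]
      simp only [if_neg hi]
      rw [Polynomial.coeff_X_pow_mul', Cmat, if_neg hi, coeffZ, hjL]
      by_cases hle : m - k - 1 - ((i : ℕ) - (n - k)) ≤ k
      · rw [if_pos hle, if_pos (by push_cast; omega)]
        congr 1
        omega
      · rw [if_neg hle, if_neg (by push_cast; omega)]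
  rw [Sres, h1, coeff_det_updateColumn, h2, Matrix.updateCol_eq_self]

lemma mulEU {m n k : ℕ} (hm : k < m) (hn : k < n) (β : F) (f g : F[X]) :
    Emat m n k β f g * Umat m n k β = EUmat m n k β f g := by
  funext p j
  rw [Matrix.mul_apply]
  by_cases hj : (j : ℕ) = m + n - 2*k - 1
  · have key : ∀ q : Fin (m + n - 2*k),
        Emat m n k β f g p q * Umat m n k β q j
          = (if q = j then Emat m n k β f g p q else 0) := by
      intro q
      rw [Umat, if_pos hj]
      by_cases hq : q = j
      · rw [if_pos hq, if_pos hq, mul_one]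
      · rw [if_neg hq, if_neg hq, mul_zero]
    rw [Finset.sum_congr rfl fun q _ => key q, Finset.sum_ite_eq' Finset.univ j, if_pos (Finset.mem_univ j)]
    rw [Emat, EUmat, if_pos hj, if_pos hj]
  · have hjlt : (j : ℕ) + 1 ≤ m + n - 2*k := by
      have := j.2
      omega
    have key : ∀ q : Fin (m + n - 2*k),
        Emat m n k β f g p q * Umat m n k β q j
          = if (q : ℕ) ≤ (j : ℕ) then
              (if (p : ℕ) < n - k then coeffZ f ((m : ℤ) + (p : ℕ) - ((q : ℕ) : ℕ))
               else coeffZ g ((k : ℤ) + (p : ℕ) - ((q : ℕ) : ℕ))) * β ^ ((j : ℕ) - (q : ℕ))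
            else 0 := by
      intro q
      rw [Umat, if_neg hj]
      by_cases hq : (q : ℕ) ≤ (j : ℕ)
      · have hq' : ¬ (q : ℕ) = m + n - 2*k - 1 := by omega
        rw [if_pos hq, if_pos hq, Emat, if_neg hq']
      · rw [if_neg hq, if_neg hq, mul_zero]
    rw [Finset.sum_congr rfl fun q _ => key q,
      sum_cut (j : ℕ) hjlt (fun l =>
        (if (p : ℕ) < n - k then coeffZ f ((m : ℤ) + (p : ℕ) - (l : ℕ))
         else coeffZ g ((k : ℤ) + (p : ℕ) - (l : ℕ))) * β ^ ((j : ℕ) - l)),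
      EUmat, if_neg hj]

lemma mulTEU {m n k : ℕ} (hm : k < m) (hn : k < n) (β : F) (f g g' : F[X])
    (hb : ∀ z : ℤ, coeffZ g z = coeffZ g' (z - 1) - β * coeffZ g' z)
    (ha0 : ∀ z : ℤ, (m : ℤ) < z → coeffZ f z = 0)
    (hb0 : ∀ z : ℤ, (n : ℤ) ≤ z → coeffZ g' z = 0) :
    Tmat m n k β * EUmat m n k β f g = Ehat m n k β f g' := by
  funext i j
  rw [Matrix.mul_apply]
  have hiv := i.2
  have hjv := j.2
  by_cases hi : (i : ℕ) < n - k - 1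
  · obtain ⟨i1, hi1⟩ : ∃ i1 : Fin (m + n - 2*k), (i1 : ℕ) = (i : ℕ) + 1 :=
      ⟨⟨(i : ℕ) + 1, by omega⟩, rfl⟩
    have hne : i ≠ i1 := fun hh => by rw [hh] at hi1; omega
    have key : ∀ p, Tmat m n k β i p * EUmat m n k β f g p j
        = (if p = i then (1 : F) else if p = i1 then -β else 0)
            * EUmat m n k β f g p j := by
      intro p
      congr 1
      rw [Tmat]
      by_cases h1 : p = i
      · rw [if_pos h1, if_pos h1]
      · rw [if_neg h1, if_neg h1]
        by_cases h2 : p = i1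
        · rw [if_pos (by rw [h2, hi1]; exact ⟨rfl, hi⟩), if_pos h2]
        · rw [if_neg (fun hh => h2 (Fin.ext (by rw [hi1]; exact hh.1))), if_neg h2]
    rw [Finset.sum_congr rfl fun p _ => key p, sum_two_spike i i1 hne]
    by_cases hj : (j : ℕ) = m + n - 2*k - 1
    · rw [EUmat, EUmat, Ehat, if_pos hj, if_pos hj, if_pos hj,
        if_pos (show (i : ℕ) < n - k by omega),
        if_pos (show (i1 : ℕ) < n - k by omega),
        if_neg (show ¬ (i : ℕ) = n - k - 1 by omega), hi1,
        show n - k - 1 - (i : ℕ) = (n - k - 1 - ((i : ℕ) + 1)) + 1 from by omega, pow_succ]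
      ring
    · rw [EUmat, EUmat, Ehat, if_neg hj, if_neg hj, if_neg hj, if_pos hi]
      simp only [if_pos (show (i : ℕ) < n - k by omega),
        if_pos (show (i1 : ℕ) < n - k by omega)]
      have hshift : ∀ l ∈ Finset.range ((j : ℕ) + 1),
          coeffZ f ((m : ℤ) + (i1 : ℕ) - l) * β ^ ((j : ℕ) - l)
            = coeffZ f (((m : ℤ) + (i : ℕ)) + 1 - l) * β ^ ((j : ℕ) - l) := by
        intro l _
        have harg : ((m : ℤ) + (i1 : ℕ) - l) = ((m : ℤ) + (i : ℕ)) + 1 - l := by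
          rw [hi1]
          push_cast
          ring
        rw [harg]
      rw [Finset.sum_congr rfl hshift]
      have hA : coeffZ f (((m : ℤ) + (i : ℕ)) + 1) = 0 := ha0 _ (by omega)
      have ht := telescope β (coeffZ f) ((m : ℤ) + (i : ℕ)) (j : ℕ) hA
      linear_combination ht
  · have key : ∀ p, Tmat m n k β i p * EUmat m n k β f g p j
        = (if p = i then (1 : F) else 0) * EUmat m n k β f g p j := by
      intro p
      congr 1
      rw [Tmat]
      by_cases h1 : p = i
      · rw [if_pos h1, if_pos h1]
      · rw [if_neg h1, if_neg h1, if_neg (fun hh => hi hh.2)]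
    rw [Finset.sum_congr rfl fun p _ => key p, sum_one_spike, one_mul]
    by_cases hj : (j : ℕ) = m + n - 2*k - 1
    · by_cases hie : (i : ℕ) = n - k - 1
      · rw [EUmat, Ehat, if_pos hj, if_pos hj, if_pos (show (i : ℕ) < n - k by omega),
          if_pos hie, hie, Nat.sub_self, pow_zero]
      · rw [EUmat, Ehat, if_pos hj, if_pos hj,
          if_neg (show ¬ (i : ℕ) < n - k by omega), if_neg hie]
    · by_cases hie : (i : ℕ) = n - k - 1
      · rw [EUmat, Ehat, if_neg hj, if_neg hj, if_neg hi, if_pos hie]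
        simp only [if_pos (show (i : ℕ) < n - k by omega)]
      · have hig : ¬ (i : ℕ) < n - k := by omega
        rw [EUmat, Ehat, if_neg hj, if_neg hj, if_neg hi, if_neg hie]
        simp only [if_neg hig]
        have expand : ∀ l ∈ Finset.range ((j : ℕ) + 1),
            coeffZ g ((k : ℤ) + (i : ℕ) - l) * β ^ ((j : ℕ) - l)
              = coeffZ g' (((k : ℤ) + (i : ℕ) - 1) - l) * β ^ ((j : ℕ) - l)
                - β * (coeffZ g' (((k : ℤ) + (i : ℕ) - 1) + 1 - l) * β ^ ((j : ℕ) - l)) := by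
          intro l _
          rw [hb ((k : ℤ) + (i : ℕ) - l),
            show ((k : ℤ) + (i : ℕ) - l - 1) = ((k : ℤ) + (i : ℕ) - 1) - l from by ring,
            show ((k : ℤ) + (i : ℕ) - l) = ((k : ℤ) + (i : ℕ) - 1) + 1 - l from by ring]
          ring
        rw [Finset.sum_congr rfl expand, Finset.sum_sub_distrib, ← Finset.mul_sum]
        have hA : coeffZ g' (((k : ℤ) + (i : ℕ) - 1) + 1) = 0 := hb0 _ (by omega)
        exact telescope β (coeffZ g') ((k : ℤ) + (i : ℕ) - 1) (j : ℕ) hA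

lemma detT {m n k : ℕ} (β : F) : (Tmat m n k β : Matrix _ _ F).det = 1 := by
  rw [Matrix.det_of_upperTriangular]
  · rw [Finset.prod_eq_one]
    intro i _
    simp [Tmat]
  · intro i j hij
    have hij' : (j : ℕ) < (i : ℕ) := hij
    rw [Tmat, if_neg (by intro hh; subst hh; omega), if_neg (by omega)]

lemma detU {m n k : ℕ} (β : F) : (Umat m n k β : Matrix _ _ F).det = 1 := by
  rw [Matrix.det_of_upperTriangular]
  · rw [Finset.prod_eq_one]
    intro i _
    by_cases hi : (i : ℕ) = m + n - 2*k - 1 <;> simp [Umat, hi]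
  · intro i j hij
    have hij' : (j : ℕ) < (i : ℕ) := hij
    rw [Umat]
    by_cases hj : (j : ℕ) = m + n - 2*k - 1
    · rw [if_pos hj, if_neg (by intro hh; subst hh; omega)]
    · rw [if_neg hj, if_neg (by omega)]

lemma step3 {m n k : ℕ} (hm : k < m) (hn : k < n) (β : F) (f g g' : F[X])
    (hb : ∀ z : ℤ, coeffZ g z = coeffZ g' (z - 1) - β * coeffZ g' z)
    (ha0 : ∀ z : ℤ, (m : ℤ) < z → coeffZ f z = 0)
    (hb0 : ∀ z : ℤ, (n : ℤ) ≤ z → coeffZ g' z = 0) :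
    (Emat m n k β f g).det = (Ehat m n k β f g').det := by
  have h1 : (Emat m n k β f g).det
      = (Tmat m n k β * Emat m n k β f g * Umat m n k β).det := by
    rw [Matrix.det_mul, Matrix.det_mul, detT, detU, one_mul, mul_one]
  rw [h1, Matrix.mul_assoc, mulEU hm hn, mulTEU hm hn β f g g' hb ha0 hb0]

lemma step4 {m n k : ℕ} (hm : k < m) (hn : k < n) (β : F) (f g' : F[X]) :
    (Ehat m n k β f g').det = (-1 : F) ^ (m - k) * (Cmat m (n - 1) k f g').det := by
  have hN : m + n - 2*k = (m + n - 2*k - 1) + 1 := by omega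
  set N1 := m + n - 2*k - 1 with hN1
  have hdet : ((Ehat m n k β f g').submatrix (finCongr hN.symm) (finCongr hN.symm)).det
      = (Ehat m n k β f g').det :=
    Matrix.det_submatrix_equiv_self (finCongr hN.symm) _
  rw [← hdet, Matrix.det_succ_column _ (Fin.last N1)]
  obtain ⟨r, hr⟩ : ∃ r : Fin (N1 + 1), (r : ℕ) = n - k - 1 := ⟨⟨n - k - 1, by omega⟩, rfl⟩
  have hlastcol : ∀ b : Fin (N1 + 1),
      ((Ehat m n k β f g').submatrix (finCongr hN.symm) (finCongr hN.symm)) b (Fin.last N1)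
        = if (b : ℕ) = n - k - 1 then 1 else 0 := by
    intro b
    rw [Matrix.submatrix_apply, Ehat]
    simp only [finCongr_apply, Fin.coe_cast, Fin.val_last]
    rw [if_pos hN1]
  rw [Finset.sum_eq_single r]
  · have hminor : (((Ehat m n k β f g').submatrix (finCongr hN.symm)
          (finCongr hN.symm)).submatrix r.succAbove (Fin.last N1).succAbove)
        = (Cmat m (n - 1) k f g').submatrix
            (finCongr (show m + (n-1) - 2*k = N1 by omega)).symm
            (finCongr (show m + (n-1) - 2*k = N1 by omega)).symm := by
      funext x y
      have hxv := x.2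
      have hyv := y.2
      simp only [Matrix.submatrix_apply, Fin.succAbove_last]
      by_cases hx : (x : ℕ) < n - k - 1
      · have hsa : r.succAbove x = Fin.castSucc x :=
          Fin.succAbove_of_castSucc_lt _ _ (by rw [Fin.lt_def, hr]; exact hx)
        rw [hsa, Ehat, Cmat]
        simp only [finCongr_apply, finCongr_symm, Fin.coe_cast, Fin.coe_castSucc]
        rw [if_neg (by omega), if_pos hx, if_pos (by omega)]
      · have hsa : r.succAbove x = Fin.succ x :=
          Fin.succAbove_of_le_castSucc _ _ (by rw [Fin.le_def, hr, Fin.coe_castSucc]; omega)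
        rw [hsa, Ehat, Cmat]
        simp only [finCongr_apply, finCongr_symm, Fin.coe_cast, Fin.coe_castSucc, Fin.val_succ]
        rw [if_neg (by omega), if_neg (by omega), if_neg (by omega), if_neg (by omega)]
        congr 1
        push_cast
        ring
    rw [hlastcol r, if_pos hr, hminor, Matrix.det_submatrix_equiv_self, mul_one,
      neg_one_pow_par (show ((r : ℕ) + ((Fin.last N1 : Fin (N1+1)) : ℕ)) % 2 = (m - k) % 2 by
        rw [hr, Fin.val_last]; omega)]
  · intro b _ hb
    rw [hlastcol b, if_neg (fun hh => hb (Fin.ext (by rw [hr]; exact hh))), mul_zero, zero_mul]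
  · intro h
    exact absurd (Finset.mem_univ r) h

end StatementTen

noncomputable section Assemble

variable {F : Type*} [Field F]

lemma RX_natDegree {ι : Type*} (a : ι → F) (S : Finset ι) :
    (RX a S).natDegree = S.card := by
  rw [RX, Polynomial.natDegree_prod _ _ (fun i _ => Polynomial.X_sub_C_ne_zero (a i))]
  simp

lemma coeffZ_zero_of_deg_lt {d : ℕ} (f : F[X]) (hf : f.natDegree = d)
    (z : ℤ) (hz : (d : ℤ) < z) : coeffZ f z = 0 := by
  rw [coeffZ]
  by_cases h0 : 0 ≤ z
  · rw [if_pos h0]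
    exact Polynomial.coeff_eq_zero_of_natDegree_lt (by omega)
  · rw [if_neg h0]

lemma coeffZ_linear_mul (β : F) (g g' : F[X]) (hsplit : g = (Polynomial.X - Polynomial.C β) * g')
    (z : ℤ) : coeffZ g z = coeffZ g' (z - 1) - β * coeffZ g' z := by
  by_cases hz : 0 ≤ z
  · rw [coeffZ, coeffZ, coeffZ, if_pos hz, if_pos hz, hsplit]
    by_cases hz1 : 0 ≤ z - 1
    · rw [if_pos hz1, show z.toNat = (z - 1).toNat + 1 by omega, sub_mul,
        Polynomial.coeff_sub, Polynomial.coeff_X_mul, Polynomial.coeff_C_mul]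
    · rw [if_neg hz1, show z.toNat = 0 by omega, Polynomial.mul_coeff_zero]
      simp only [Polynomial.coeff_sub, Polynomial.coeff_X_zero, Polynomial.coeff_C_zero]
      ring
  · rw [coeffZ, coeffZ, coeffZ, if_neg hz, if_neg (by omega), if_neg hz]
    ring

end Assemble



/-- for `0 ≤ k < min(m,n)` and `β = B j0` a root of `g`,
`Sres_k(f,g)(β) = (−1)^{m−k} coeff_k(Sres_k(f, g/(x−β))) · f(β)`, where `g/(x−β)` is the
exact quotient `∏_{j ≠ j0} (x − β_j)` and `Sres_k` on the right is formed w.r.t.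
degrees `m` and `n−1`. -/
theorem Sres_eval_root_g {F : Type*} [Field F] {m n : ℕ} (hm : 1 ≤ m) (hn : 1 ≤ n)
    (A : Fin m → F) (B : Fin n → F)
    (hA : Function.Injective A) (hB : Function.Injective B)
    (f g : Polynomial F) (hf : f = RX A Finset.univ) (hg : g = RX B Finset.univ)
    (k : ℕ) (hk : k < min m n) (j0 : Fin n) :
    (Sres m n k f g).eval (B j0)
      = (-1 : F) ^ (m - k)
          * (Sres m (n - 1) k f (RX B (Finset.univ.erase j0))).coeff k
          * f.eval (B j0) := by
  have hkm : k < m := lt_of_lt_of_le hk (min_le_left _ _)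
  have hkn : k < n := lt_of_lt_of_le hk (min_le_right _ _)
  set β := B j0 with hβ
  set g' : Polynomial F := RX B (Finset.univ.erase j0) with hg'
  have hsplit : g = (Polynomial.X - Polynomial.C β) * g' := by
    rw [hg, hg', RX, RX, ← Finset.mul_prod_erase _ _ (Finset.mem_univ j0)]
  have geval : g.eval β = 0 := by
    rw [hsplit]
    simp
  have hfd : f.natDegree = m := by
    rw [hf, RX_natDegree]
    simp
  have hgd' : g'.natDegree = n - 1 := by
    rw [hg', RX_natDegree, Finset.card_erase_of_mem (Finset.mem_univ j0)]
    simp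
  have ha0 : ∀ z : ℤ, (m : ℤ) < z → coeffZ f z = 0 := fun z hz =>
    coeffZ_zero_of_deg_lt f hfd z hz
  have hb0 : ∀ z : ℤ, (n : ℤ) ≤ z → coeffZ g' z = 0 := fun z hz =>
    coeffZ_zero_of_deg_lt g' hgd' z (by omega)
  have hb : ∀ z : ℤ, coeffZ g z = coeffZ g' (z - 1) - β * coeffZ g' z := fun z =>
    coeffZ_linear_mul β g g' hsplit z
  rw [step1 hkm hkn β f g geval, step3 hkm hkn β f g g' hb ha0 hb0,
    step4 hkm hkn β f g', sres_coeff hkm (by omega) f g']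
  ring
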